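/- For discrete functions v, g on {0,...,N+1} with v_0 = v_{N+1} = 0, one has 2h·Σ_{j=1}^{N} g_j v_j (∂_h v)_j = − h·Σ_{j=1}^{N} v_j² (∂_h g)_j + (h³/2)·Σ_{j=0}^{N} ((∂_h^+ v)_j)² (∂_h^+ g)_j. -/

import Mathlib

private lemma key (v g : ℕ → ℝ) (N : ℕ) :
    ∑ j ∈ Finset.Icc 1 N,
      ((v (j + 1) - v j) ^ 2 * (g (j + 1) - g j)
        - (2 * g j * v j * (v (j + 1) - v (j - 1)) + v j ^ 2 * (g (j + 1) - g (j - 1))))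
    = (v (N + 1) ^ 2 * g (N + 1) - 2 * v N * v (N + 1) * g (N + 1) - v (N + 1) ^ 2 * g N)
      - (v 1 ^ 2 * g 1 - 2 * v 0 * v 1 * g 1 - v 1 ^ 2 * g 0) := by
  induction N with
  | zero => simp
  | succ n ih =>
    rw [Finset.sum_Icc_succ_top (by omega : 1 ≤ n + 1), ih]
    simp only [Nat.add_sub_cancel]
    ring

theorem stmt11 (N : ℕ) (h : ℝ) (hh : h = 1 / (N + 1)) (v g : ℕ → ℝ)
    (hv0 : v 0 = 0) (hvN : v (N + 1) = 0) :
    2 * (h * ∑ j ∈ Finset.Icc 1 N, g j * v j * ((v (j + 1) - v (j - 1)) / (2 * h))) =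
      - (h * ∑ j ∈ Finset.Icc 1 N, (v j) ^ 2 * ((g (j + 1) - g (j - 1)) / (2 * h)))
        + (h ^ 3 / 2) * ∑ j ∈ Finset.range (N + 1),
            ((v (j + 1) - v j) / h) ^ 2 * ((g (j + 1) - g j) / h) := by
  have hN1 : (0:ℝ) < (N:ℝ) + 1 := by positivity
  have hpos : (0:ℝ) < h := by rw [hh]; positivity
  have hne : h ≠ 0 := ne_of_gt hpos
  set S1 := ∑ j ∈ Finset.Icc 1 N, g j * v j * (v (j + 1) - v (j - 1)) with hS1
  set S2 := ∑ j ∈ Finset.Icc 1 N, v j ^ 2 * (g (j + 1) - g (j - 1)) with hS2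
  set S3 := ∑ j ∈ Finset.range (N + 1), (v (j + 1) - v j) ^ 2 * (g (j + 1) - g j) with hS3
  have e1 : ∑ j ∈ Finset.Icc 1 N, g j * v j * ((v (j + 1) - v (j - 1)) / (2 * h))
      = S1 / (2 * h) := by
    rw [hS1, Finset.sum_div]
    exact Finset.sum_congr rfl fun j _ => by ring
  have e2 : ∑ j ∈ Finset.Icc 1 N, (v j) ^ 2 * ((g (j + 1) - g (j - 1)) / (2 * h))
      = S2 / (2 * h) := by
    rw [hS2, Finset.sum_div]
    exact Finset.sum_congr rfl fun j _ => by ring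
  have e3 : ∑ j ∈ Finset.range (N + 1), ((v (j + 1) - v j) / h) ^ 2 * ((g (j + 1) - g j) / h)
      = S3 / h ^ 3 := by
    rw [hS3, Finset.sum_div]
    refine Finset.sum_congr rfl fun j _ => ?_
    rw [div_pow, div_mul_div_comm]
    congr 1
  -- main sum identity: 2*S1 + S2 = S3
  have hIccR : ∀ (f : ℕ → ℝ) (n : ℕ), ∑ j ∈ Finset.Icc 1 n, f j
      = ∑ j ∈ Finset.range n, f (j + 1) := by
    intro f n
    induction n with
    | zero => simp
    | succ m ih =>
      rw [Finset.sum_Icc_succ_top (by omega : 1 ≤ m + 1), Finset.sum_range_succ, ih]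
  have hsplit : S3 = (v 1 - v 0) ^ 2 * (g 1 - g 0)
      + ∑ j ∈ Finset.Icc 1 N, (v (j + 1) - v j) ^ 2 * (g (j + 1) - g j) := by
    rw [hS3, Finset.sum_range_succ', hIccR]
    simp [add_comm]
  have hk := key v g N
  rw [Finset.sum_sub_distrib] at hk
  have hmain : 2 * S1 + S2 = S3 := by
    have : ∑ j ∈ Finset.Icc 1 N, (v (j + 1) - v j) ^ 2 * (g (j + 1) - g j)
        - ∑ j ∈ Finset.Icc 1 N,
            (2 * g j * v j * (v (j + 1) - v (j - 1)) + v j ^ 2 * (g (j + 1) - g (j - 1)))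
        = - (v 1 ^ 2 * g 1 - v 1 ^ 2 * g 0) := by
      rw [hk, hvN, hv0]; ring
    have hsum2 : ∑ j ∈ Finset.Icc 1 N,
        (2 * g j * v j * (v (j + 1) - v (j - 1)) + v j ^ 2 * (g (j + 1) - g (j - 1)))
        = 2 * S1 + S2 := by
      rw [hS1, hS2, Finset.mul_sum, ← Finset.sum_add_distrib]
      exact Finset.sum_congr rfl fun j _ => by ring
    rw [hsum2] at this
    rw [hsplit, hv0]
    linarith
  rw [e1, e2, e3]
  have c1 : 2 * (h * (S1 / (2 * h))) = S1 := by field_simp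
  have c2 : h * (S2 / (2 * h)) = S2 / 2 := by
    rw [eq_div_iff (by norm_num : (2:ℝ) ≠ 0)]; field_simp
  have c3 : h ^ 3 / 2 * (S3 / h ^ 3) = S3 / 2 := by
    rw [eq_div_iff (by norm_num : (2:ℝ) ≠ 0)]; field_simp
  rw [c1, c2, c3]
  linarith
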